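/- Let Δ be a (c+1)×(c+1) minor of the generic r×s matrix (x_{ij}), and let φ send x_{ij} to x_{ij}^{(0)} + x_{ij}^{(1)}t + x_{ij}^{(2)}t², computed modulo t³. Then each of the coefficients of t⁰, t¹, t² in φ(Δ) lies in the ideal generated by all products of c-1 distinct variables of the form x_{ij}^{(0)}; equivalently, every monomial appearing in these coefficients contains at least c-1 factors from {x_{ij}^{(0)}}. -/

import Mathlib

open Polynomial MvPolynomial

lemma key_term (k : Type) [Field k] (r s c : ℕ) (hc : 2 ≤ c)
    (ρ : Fin (c + 1) → Fin r) (σ : Fin (c + 1) → Fin s)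
    (hρ : Function.Injective ρ) (hσ : Function.Injective σ)
    (π : Equiv.Perm (Fin (c + 1))) (m : ℕ) (hm : m ≤ 2) :
    ((∏ i : Fin (c + 1),
      (Polynomial.C (MvPolynomial.X ((0 : Fin 3), ρ (π i), σ i) : MvPolynomial (Fin 3 × Fin r × Fin s) k) +
        Polynomial.C (MvPolynomial.X ((1 : Fin 3), ρ (π i), σ i)) * Polynomial.X +
        Polynomial.C (MvPolynomial.X ((2 : Fin 3), ρ (π i), σ i)) * Polynomial.X ^ 2)).coeff m) ∈
    Ideal.span {g | ∃ T : Finset (Fin r × Fin s), T.card = c - 1 ∧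
        g = ∏ p ∈ T, MvPolynomial.X ((0 : Fin 3), p.1, p.2)} := by
  classical
  set f : Fin (c+1) → Polynomial (MvPolynomial (Fin 3 × Fin r × Fin s) k) := fun i =>
      (Polynomial.C (MvPolynomial.X ((0 : Fin 3), ρ (π i), σ i)) +
        Polynomial.C (MvPolynomial.X ((1 : Fin 3), ρ (π i), σ i)) * Polynomial.X +
        Polynomial.C (MvPolynomial.X ((2 : Fin 3), ρ (π i), σ i)) * Polynomial.X ^ 2) with hf
  have hcoe : ((∏ i : Fin (c+1), f i).coeff m)
      = PowerSeries.coeff m ((∏ i : Fin (c+1), f i : Polynomial _) : PowerSeries _) := by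
    rw [Polynomial.coeff_coe]
  rw [hcoe, ← Polynomial.coeToPowerSeries.ringHom_apply,
    map_prod Polynomial.coeToPowerSeries.ringHom _ Finset.univ]
  simp only [Polynomial.coeToPowerSeries.ringHom_apply]
  rw [PowerSeries.coeff_prod]
  apply Ideal.sum_mem
  intro μ hμ
  rw [Finset.mem_finsuppAntidiag] at hμ
  -- support small
  have hsupp : μ.support.card ≤ m := by
    calc μ.support.card = ∑ i ∈ μ.support, 1 := by simp
    _ ≤ ∑ i ∈ μ.support, μ i := Finset.sum_le_sum (fun i hi => Nat.one_le_iff_ne_zero.2 (Finsupp.mem_support_iff.1 hi))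
    _ ≤ ∑ i : Fin (c+1), μ i := Finset.sum_le_sum_of_subset (Finset.subset_univ _)
    _ = m := hμ.1
  set S : Finset (Fin (c+1)) := Finset.univ \ μ.support with hS
  have hScard : c - 1 ≤ S.card := by
    rw [hS, Finset.card_sdiff_of_subset (Finset.subset_univ _)]
    simp only [Finset.card_univ, Fintype.card_fin]
    omega
  obtain ⟨S', hS'sub, hS'card⟩ := Finset.exists_subset_card_eq hScard
  have hS'univ : S' ⊆ Finset.univ := Finset.subset_univ _
  rw [← Finset.prod_sdiff hS'univ]
  -- factor over S'
  have hprodS' : (∏ i ∈ S', (PowerSeries.coeff (μ i)) ((f i : Polynomial (MvPolynomial (Fin 3 × Fin r × Fin s) k)) : PowerSeries (MvPolynomial (Fin 3 × Fin r × Fin s) k)))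
      = ∏ p ∈ S'.image (fun i => (ρ (π i), σ i)), MvPolynomial.X ((0 : Fin 3), p.1, p.2) := by
    rw [Finset.prod_image]
    · apply Finset.prod_congr rfl
      intro i hi
      have hμi : μ i = 0 := by
        have := hS'sub hi
        rw [hS, Finset.mem_sdiff] at this
        simpa using Finsupp.notMem_support_iff.1 this.2
      rw [hμi, Polynomial.coeff_coe, hf]
      simp
    · intro a _ b _ hab
      exact hσ (congrArg Prod.snd hab)
  refine Ideal.mul_mem_left _ _ ?_
  rw [hprodS']
  apply Ideal.subset_span
  refine ⟨S'.image (fun i => (ρ (π i), σ i)), ?_, rfl⟩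
  rw [Finset.card_image_of_injective _ (fun a b hab => hσ (congrArg Prod.snd hab)), hS'card]

theorem minor_second_jet_coeffs (k : Type) [Field k] (r s c : ℕ) (hc : 2 ≤ c)
    (ρ : Fin (c + 1) → Fin r) (σ : Fin (c + 1) → Fin s)
    (hρ : Function.Injective ρ) (hσ : Function.Injective σ) :
    let φ : MvPolynomial (Fin r × Fin s) k →ₐ[k]
        Polynomial (MvPolynomial (Fin 3 × Fin r × Fin s) k) :=
      MvPolynomial.aeval fun p =>
        Polynomial.C (MvPolynomial.X ((0 : Fin 3), p.1, p.2)) +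
          Polynomial.C (MvPolynomial.X ((1 : Fin 3), p.1, p.2)) * Polynomial.X +
          Polynomial.C (MvPolynomial.X ((2 : Fin 3), p.1, p.2)) * Polynomial.X ^ 2
    let Δ : MvPolynomial (Fin r × Fin s) k :=
      Matrix.det (Matrix.of fun a b : Fin (c + 1) => MvPolynomial.X (ρ a, σ b))
    let I : Ideal (MvPolynomial (Fin 3 × Fin r × Fin s) k) :=
      Ideal.span {g | ∃ T : Finset (Fin r × Fin s), T.card = c - 1 ∧
        g = ∏ p ∈ T, MvPolynomial.X ((0 : Fin 3), p.1, p.2)}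
    (φ Δ).coeff 0 ∈ I ∧ (φ Δ).coeff 1 ∈ I ∧ (φ Δ).coeff 2 ∈ I := by
  intro φ Δ I
  have key : ∀ m : ℕ, m ≤ 2 → (φ Δ).coeff m ∈ I := by
    intro m hm
    have hdet : φ Δ = Matrix.det ((Matrix.of fun a b : Fin (c + 1) =>
        MvPolynomial.X (ρ a, σ b)).map φ) := AlgHom.map_det φ _
    rw [hdet, Matrix.det_apply]
    have : ∀ π : Equiv.Perm (Fin (c+1)), ∀ i,
        ((Matrix.of fun a b : Fin (c + 1) => MvPolynomial.X (ρ a, σ b)).map φ) (π i) i =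
        (Polynomial.C (MvPolynomial.X ((0 : Fin 3), ρ (π i), σ i) : MvPolynomial (Fin 3 × Fin r × Fin s) k) +
          Polynomial.C (MvPolynomial.X ((1 : Fin 3), ρ (π i), σ i)) * Polynomial.X +
          Polynomial.C (MvPolynomial.X ((2 : Fin 3), ρ (π i), σ i)) * Polynomial.X ^ 2) := by
      intro π i
      simp [φ, Matrix.map_apply, MvPolynomial.aeval_X]
    rw [Polynomial.finset_sum_coeff]
    apply Ideal.sum_mem
    intro π _
    rw [Polynomial.coeff_smul]
    have hprod : (∏ i, ((Matrix.of fun a b : Fin (c + 1) =>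
        MvPolynomial.X (ρ a, σ b)).map φ) (π i) i).coeff m ∈ I := by
      simp only [this π]
      exact key_term k r s c hc ρ σ hρ hσ π m hm
    rw [Units.smul_def]
    exact zsmul_mem hprod _
  exact ⟨key 0 (by norm_num), key 1 (by norm_num), key 2 le_rfl⟩
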